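/- Let A ∈ ℂ^{n×n} (n ≥ 1) be Hermitian positive definite, let A^{1/2} denote its unique positive-definite square root, A^{−1/2} = (A^{1/2})⁻¹, and let (Aᵀ)^{1/2} denote the unique positive-definite square root of the transpose Aᵀ. Define the n²×n² matrix J = (1/2)(I − (Aᵀ)^{1/2} ⊗ A^{−1/2}), where ⊗ is the Kronecker product. Then the spectral radius of J is at most 1 if and only if λ_max(A) ≤ 9·λ_min(A), where λ_max(A) and λ_min(A) are the largest and smallest eigenvalues of A. -/

import Mathlib

open Matrix Kronecker
open scoped ComplexOrder

lemma myspec_transpose {n : ℕ} (A : Matrix (Fin n) (Fin n) ℂ) :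
    spectrum ℂ Aᵀ = spectrum ℂ A := by
  ext z
  simp only [spectrum.mem_iff, not_iff_not]
  have h : (algebraMap ℂ (Matrix (Fin n) (Fin n) ℂ)) z - Aᵀ =
      ((algebraMap ℂ (Matrix (Fin n) (Fin n) ℂ)) z - A)ᵀ := by
    rw [transpose_sub]
    congr 1
    simp [Matrix.algebraMap_eq_diagonal]
  rw [h, Matrix.isUnit_iff_isUnit_det, Matrix.det_transpose, ← Matrix.isUnit_iff_isUnit_det]

lemma myspec_herm {n : ℕ} {A : Matrix (Fin n) (Fin n) ℂ} (hA : A.IsHermitian) :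
    spectrum ℂ A = Set.range (fun i => (hA.eigenvalues i : ℂ)) := by
  conv_lhs => rw [hA.spectral_theorem, Unitary.conjStarAlgAut_apply, Unitary.spectrum_star_right_conjugate]
  rw [spectrum_diagonal]
  rfl

/-- Conditional stability of the inverse-Newton iteration: for a Hermitian
positive definite `A` with positive-definite square root `S` (and `T` the
positive-definite square root of `Aᵀ`), the spectral radius of the Jacobian
`J = (1/2)(I - (Aᵀ)^{1/2} ⊗ A^{-1/2})` is at most `1` iff
`λ_max(A) ≤ 9 λ_min(A)`. -/
theorem spectralRadius_J_le_one_iff {n : ℕ} (hn : 0 < n)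
    (A : Matrix (Fin n) (Fin n) ℂ) (hA : A.PosDef)
    (S : Matrix (Fin n) (Fin n) ℂ) (hS : S.PosDef) (hS2 : S ^ 2 = A)
    (T : Matrix (Fin n) (Fin n) ℂ) (hT : T.PosDef) (hT2 : T ^ 2 = Aᵀ) :
    spectralRadius ℂ
        ((1/2 : ℂ) • ((1 : Matrix (Fin n × Fin n) (Fin n × Fin n) ℂ) - T ⊗ₖ S⁻¹))
        ≤ 1 ↔
      Finset.univ.sup' (Finset.univ_nonempty_iff.mpr (Fin.pos_iff_nonempty.mp hn))
          hA.isHermitian.eigenvalues ≤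
        9 * Finset.univ.inf' (Finset.univ_nonempty_iff.mpr (Fin.pos_iff_nonempty.mp hn))
          hA.isHermitian.eigenvalues := by
  classical
  set l := hA.isHermitian.eigenvalues with hl
  set σ := hS.isHermitian.eigenvalues with hσ
  set τ := hT.isHermitian.eigenvalues with hτ
  have hσpos : ∀ i, 0 < σ i := hS.eigenvalues_pos
  have hτpos : ∀ i, 0 < τ i := hT.eigenvalues_pos
  have specA : spectrum ℂ A = Set.range (fun i => (l i : ℂ)) := myspec_herm hA.isHermitian
  have specS : spectrum ℂ S = Set.range (fun i => (σ i : ℂ)) := myspec_herm hS.isHermitian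
  have specT : spectrum ℂ T = Set.range (fun i => (τ i : ℂ)) := myspec_herm hT.isHermitian
  -- range relations
  have hran_lσ : Set.range (fun i => (l i : ℂ)) = Set.range (fun j => ((σ j : ℂ)) ^ 2) := by
    rw [← specA, ← hS2, spectrum.map_pow_of_pos S two_pos, specS, ← Set.range_comp]
    rfl
  have hran_lτ : Set.range (fun i => (l i : ℂ)) = Set.range (fun j => ((τ j : ℂ)) ^ 2) := by
    rw [← specA, ← myspec_transpose, ← hT2, spectrum.map_pow_of_pos T two_pos, specT,
      ← Set.range_comp]
    rfl
  have hlσ : ∀ i, ∃ j, l i = σ j ^ 2 := by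
    intro i
    obtain ⟨j, hj⟩ := hran_lσ ▸ Set.mem_range_self (f := fun i => (l i : ℂ)) i
    simp only at hj
    exact ⟨j, by exact_mod_cast hj.symm⟩
  have hσl : ∀ j, ∃ i, σ j ^ 2 = l i := by
    intro j
    obtain ⟨i, hi⟩ := hran_lσ.symm ▸ Set.mem_range_self (f := fun j => ((σ j : ℂ)) ^ 2) j
    simp only at hi
    exact ⟨i, by exact_mod_cast hi.symm⟩
  have hlτ : ∀ i, ∃ j, l i = τ j ^ 2 := by
    intro i
    obtain ⟨j, hj⟩ := hran_lτ ▸ Set.mem_range_self (f := fun i => (l i : ℂ)) i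
    simp only at hj
    exact ⟨j, by exact_mod_cast hj.symm⟩
  have hτl : ∀ j, ∃ i, τ j ^ 2 = l i := by
    intro j
    obtain ⟨i, hi⟩ := hran_lτ.symm ▸ Set.mem_range_self (f := fun j => ((τ j : ℂ)) ^ 2) j
    simp only at hi
    exact ⟨i, by exact_mod_cast hi.symm⟩
  -- diagonalization data
  set U : Matrix (Fin n) (Fin n) ℂ := (hS.isHermitian.eigenvectorUnitary : Matrix (Fin n) (Fin n) ℂ) with hU
  set V : Matrix (Fin n) (Fin n) ℂ := (hT.isHermitian.eigenvectorUnitary : Matrix (Fin n) (Fin n) ℂ) with hV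
  have hUl : star U * U = 1 := mem_unitaryGroup_iff'.mp hS.isHermitian.eigenvectorUnitary.2
  have hUr : U * star U = 1 := mem_unitaryGroup_iff.mp hS.isHermitian.eigenvectorUnitary.2
  have hVl : star V * V = 1 := mem_unitaryGroup_iff'.mp hT.isHermitian.eigenvectorUnitary.2
  have hVr : V * star V = 1 := mem_unitaryGroup_iff.mp hT.isHermitian.eigenvectorUnitary.2
  have hSinv : S⁻¹ = U * diagonal (fun i => ((σ i : ℂ))⁻¹) * star U := by
    apply inv_eq_right_inv
    conv_lhs => rw [hS.isHermitian.spectral_theorem]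
    calc (U * diagonal (RCLike.ofReal ∘ σ) * star U) *
          (U * diagonal (fun i => ((σ i : ℂ))⁻¹) * star U)
        = U * (diagonal (RCLike.ofReal ∘ σ) * ((star U * U) *
            diagonal (fun i => ((σ i : ℂ))⁻¹))) * star U := by
          simp only [Matrix.mul_assoc]
      _ = U * (diagonal (RCLike.ofReal ∘ σ) * diagonal (fun i => ((σ i : ℂ))⁻¹)) * star U := by
          rw [hUl, Matrix.one_mul]
      _ = 1 := by
          rw [diagonal_mul_diagonal]
          have : (fun i => (RCLike.ofReal ∘ σ) i * ((σ i : ℂ))⁻¹) = fun _ => (1 : ℂ) := by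
            funext i
            have : (σ i : ℂ) ≠ 0 := by
              exact_mod_cast (hσpos i).ne'
            simp [Function.comp, mul_inv_cancel₀ this]
          rw [this, diagonal_one, Matrix.mul_one, hUr]
  have hkron : T ⊗ₖ S⁻¹ =
      (V ⊗ₖ U) * diagonal (fun p : Fin n × Fin n => (τ p.1 : ℂ) * ((σ p.2 : ℂ))⁻¹) *
        ((star V) ⊗ₖ (star U)) := by
    conv_lhs => rw [hT.isHermitian.spectral_theorem, Unitary.conjStarAlgAut_apply, hSinv]
    rw [Matrix.mul_kronecker_mul, Matrix.mul_kronecker_mul, diagonal_kronecker_diagonal]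
    rfl
  have hwr : (V ⊗ₖ U) * ((star V) ⊗ₖ (star U)) = 1 := by
    rw [← Matrix.mul_kronecker_mul, hVr, hUr, Matrix.one_kronecker_one]
  have hwl : ((star V) ⊗ₖ (star U)) * (V ⊗ₖ U) = 1 := by
    rw [← Matrix.mul_kronecker_mul, hVl, hUl, Matrix.one_kronecker_one]
  set w : (Matrix (Fin n × Fin n) (Fin n × Fin n) ℂ)ˣ :=
    ⟨V ⊗ₖ U, (star V) ⊗ₖ (star U), hwr, hwl⟩ with hw
  have hJ : (1/2 : ℂ) • ((1 : Matrix (Fin n × Fin n) (Fin n × Fin n) ℂ) - T ⊗ₖ S⁻¹) =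
      (↑w : Matrix (Fin n × Fin n) (Fin n × Fin n) ℂ) * diagonal (fun p : Fin n × Fin n =>
        (1/2 : ℂ) * (1 - (τ p.1 : ℂ) * ((σ p.2 : ℂ))⁻¹)) *
        (↑w⁻¹ : Matrix (Fin n × Fin n) (Fin n × Fin n) ℂ) := by
    have hd : diagonal (fun p : Fin n × Fin n =>
        (1/2 : ℂ) * (1 - (τ p.1 : ℂ) * ((σ p.2 : ℂ))⁻¹)) =
        (1/2 : ℂ) • ((1 : Matrix (Fin n × Fin n) (Fin n × Fin n) ℂ) -
          diagonal (fun p : Fin n × Fin n => (τ p.1 : ℂ) * ((σ p.2 : ℂ))⁻¹)) := by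
      ext p q
      by_cases h : p = q <;>
        simp [Matrix.diagonal_apply, h, Matrix.one_apply, mul_sub]
    rw [hd, hkron]
    show _ = (V ⊗ₖ U) * _ * ((star V) ⊗ₖ (star U))
    rw [Matrix.mul_smul, Matrix.smul_mul]
    congr 1
    rw [Matrix.mul_sub, Matrix.sub_mul, Matrix.mul_one, hwr]
  have specJ : spectrum ℂ
      ((1/2 : ℂ) • ((1 : Matrix (Fin n × Fin n) (Fin n × Fin n) ℂ) - T ⊗ₖ S⁻¹)) =
      Set.range (fun p : Fin n × Fin n =>
        (1/2 : ℂ) * (1 - (τ p.1 : ℂ) * ((σ p.2 : ℂ))⁻¹)) := by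
    rw [hJ, spectrum.units_conjugate, spectrum_diagonal]
  have hrad : spectralRadius ℂ
      ((1/2 : ℂ) • ((1 : Matrix (Fin n × Fin n) (Fin n × Fin n) ℂ) - T ⊗ₖ S⁻¹)) ≤ 1 ↔
      ∀ i j : Fin n, ‖(1/2 : ℂ) * (1 - (τ i : ℂ) * ((σ j : ℂ))⁻¹)‖ ≤ 1 := by
    rw [spectralRadius, specJ]
    rw [iSup₂_le_iff]
    constructor
    · intro h i j
      have := h _ ⟨(i, j), rfl⟩
      rw [← ENNReal.coe_one, ENNReal.coe_le_coe] at this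
      exact_mod_cast this
    · rintro h k ⟨⟨i, j⟩, rfl⟩
      rw [← ENNReal.coe_one, ENNReal.coe_le_coe]
      exact_mod_cast h i j
  have hnorm : ∀ i j : Fin n,
      ‖(1/2 : ℂ) * (1 - (τ i : ℂ) * ((σ j : ℂ))⁻¹)‖ ≤ 1 ↔ τ i ≤ 3 * σ j := by
    intro i j
    have hσj := hσpos j
    have hτi := hτpos i
    have hcast : (1 : ℂ) - (τ i : ℂ) * ((σ j : ℂ))⁻¹ = ((1 - τ i / σ j : ℝ) : ℂ) := by
      push_cast
      rw [div_eq_mul_inv]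
    have h12 : ‖(1/2 : ℂ)‖ = 1/2 := by norm_num
    rw [norm_mul, hcast, Complex.norm_real, Real.norm_eq_abs, h12]
    constructor
    · intro h
      have h2 := abs_le.mp (show |1 - τ i / σ j| ≤ 2 by linarith)
      have h3 : τ i / σ j ≤ 3 := by linarith [h2.1]
      calc τ i = (τ i / σ j) * σ j := by field_simp
        _ ≤ 3 * σ j := by nlinarith
    · intro h
      have h3 : τ i / σ j ≤ 3 := by rw [div_le_iff₀ hσj]; linarith
      have h0 : 0 < τ i / σ j := div_pos hτi hσj
      have habs : |1 - τ i / σ j| ≤ 2 := abs_le.mpr ⟨by linarith, by linarith⟩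
      linarith
  rw [hrad]
  have hRHS : (Finset.univ.sup' (Finset.univ_nonempty_iff.mpr (Fin.pos_iff_nonempty.mp hn)) l ≤
      9 * Finset.univ.inf' (Finset.univ_nonempty_iff.mpr (Fin.pos_iff_nonempty.mp hn)) l) ↔
      ∀ i j : Fin n, l i ≤ 9 * l j := by
    rw [Finset.sup'_le_iff]
    constructor
    · intro h i j
      refine (h i (Finset.mem_univ i)).trans ?_
      have := Finset.inf'_le l (Finset.mem_univ j)
      linarith
    · intro h i _
      rw [show (9 : ℝ) * Finset.univ.inf' _ l =
        Finset.univ.inf' (Finset.univ_nonempty_iff.mpr (Fin.pos_iff_nonempty.mp hn)) l * 9 from mul_comm _ _,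
        ← div_le_iff₀ (by norm_num : (0:ℝ) < 9), ]
      rw [Finset.le_inf'_iff]
      intro j _
      rw [div_le_iff₀ (by norm_num : (0:ℝ) < 9)]
      have := h i j
      linarith
  rw [hRHS]
  constructor
  · intro h i j
    obtain ⟨i', hi'⟩ := hlτ i
    obtain ⟨j', hj'⟩ := hlσ j
    have hij := (hnorm i' j').mp (h i' j')
    have : τ i' ^ 2 ≤ (3 * σ j') ^ 2 :=
      pow_le_pow_left₀ (hτpos i').le hij 2
    rw [hi', hj']
    nlinarith [hσpos j', hτpos i']
  · intro h i j
    rw [hnorm i j]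
    obtain ⟨i'', hi''⟩ := hτl i
    obtain ⟨j'', hj''⟩ := hσl j
    have hij := h i'' j''
    rw [← hi'', ← hj''] at hij
    have hsq : τ i ^ 2 ≤ (3 * σ j) ^ 2 := by nlinarith
    exact (pow_le_pow_iff_left₀ (hτpos i).le (mul_nonneg (by norm_num) (hσpos j).le) (by norm_num)).mp hsq
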